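/- Let P be a nonzero 2×2 real matrix, let δ ≥ 0 satisfy |det P| ≤ δ, and let γ_max denote the maximum of the Euclidean norms of the two rows and the two columns of P. Then there exists a 2×2 real matrix P̂ of rank at most 1 such that ‖P − P̂‖_F ≤ δ/γ_max. -/
import Mathlib
set_option maxHeartbeats 1000000

lemma rank_vmv (u v : Fin 2 → ℝ) : (Matrix.vecMulVec u v).rank ≤ 1 := by
  rw [Matrix.vecMulVec_eq Unit]
  exact (Matrix.rank_mul_le_right _ _).trans
    ((Matrix.rank_le_card_height _).trans (by simp))

lemma key_dist (a b c d : ℝ) (h : a ^ 2 + b ^ 2 ≠ 0) :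
    Real.sqrt ((c - (a * c + b * d) / (a ^ 2 + b ^ 2) * a) ^ 2
        + (d - (a * c + b * d) / (a ^ 2 + b ^ 2) * b) ^ 2)
      = |a * d - b * c| / Real.sqrt (a ^ 2 + b ^ 2) := by
  have h1 : (c - (a * c + b * d) / (a ^ 2 + b ^ 2) * a) ^ 2
      + (d - (a * c + b * d) / (a ^ 2 + b ^ 2) * b) ^ 2
      = (a * d - b * c) ^ 2 / (a ^ 2 + b ^ 2) := by
    field_simp; ring
  rw [h1, Real.sqrt_div (by positivity), Real.sqrt_sq_eq_abs]

/-- Let P be a nonzero 2×2 real matrix, let δ ≥ 0 satisfy |det P| ≤ δ, and let γ_max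
denote the maximum of the Euclidean norms of the two rows and the two columns of P.
Then there exists a 2×2 real matrix P̂ of rank at most 1 such that ‖P − P̂‖_F ≤ δ/γ_max. -/
theorem stmt5 (P : Matrix (Fin 2) (Fin 2) ℝ) (hP : P ≠ 0)
    (δ : ℝ) (hδ : 0 ≤ δ) (hdet : |P.det| ≤ δ) :
    ∃ Phat : Matrix (Fin 2) (Fin 2) ℝ, Phat.rank ≤ 1 ∧
      Real.sqrt (∑ i, ∑ j, (P i j - Phat i j) ^ 2) ≤
        δ / max (max (Real.sqrt ((P 0 0) ^ 2 + (P 0 1) ^ 2))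
                     (Real.sqrt ((P 1 0) ^ 2 + (P 1 1) ^ 2)))
                (max (Real.sqrt ((P 0 0) ^ 2 + (P 1 0) ^ 2))
                     (Real.sqrt ((P 0 1) ^ 2 + (P 1 1) ^ 2))) := by
  set a := P 0 0 with ha
  set b := P 0 1 with hb
  set c := P 1 0 with hc
  set d := P 1 1 with hd
  have hD : P.det = a * d - b * c := by rw [Matrix.det_fin_two]
  set s1 := Real.sqrt (a ^ 2 + b ^ 2) with hs1
  set s2 := Real.sqrt (c ^ 2 + d ^ 2) with hs2
  set s3 := Real.sqrt (a ^ 2 + c ^ 2) with hs3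
  set s4 := Real.sqrt (b ^ 2 + d ^ 2) with hs4
  set G := max (max s1 s2) (max s3 s4) with hG
  have hGpos : 0 < G := by
    rcases lt_or_ge 0 G with h | h
    · exact h
    · exfalso
      have e1 : s1 = 0 := le_antisymm (le_trans (le_trans (le_max_left _ _) (le_max_left _ _)) h) (Real.sqrt_nonneg _)
      have e2 : s2 = 0 := le_antisymm (le_trans (le_trans (le_max_right _ _) (le_max_left _ _)) h) (Real.sqrt_nonneg _)
      have f1 : a ^ 2 + b ^ 2 = 0 := by
        have := Real.sqrt_eq_zero (by positivity : (0:ℝ) ≤ a ^ 2 + b ^ 2) |>.mp e1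
        exact this
      have f2 : c ^ 2 + d ^ 2 = 0 := by
        have := Real.sqrt_eq_zero (by positivity : (0:ℝ) ≤ c ^ 2 + d ^ 2) |>.mp e2
        exact this
      have ea : a = 0 := by nlinarith [sq_nonneg a, sq_nonneg b]
      have eb : b = 0 := by nlinarith [sq_nonneg a, sq_nonneg b]
      have ec : c = 0 := by nlinarith [sq_nonneg c, sq_nonneg d]
      have ed : d = 0 := by nlinarith [sq_nonneg c, sq_nonneg d]
      apply hP
      ext i j
      fin_cases i <;> fin_cases j <;> simpa [← ha, ← hb, ← hc, ← hd]
  have habs : |a * d - b * c| ≤ δ := hD ▸ hdet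
  have hdiv : |a * d - b * c| / G ≤ δ / G := by
    exact div_le_div_of_nonneg_right habs hGpos.le
  have hcase : G = s1 ∨ G = s2 ∨ G = s3 ∨ G = s4 := by
    rcases max_choice (max s1 s2) (max s3 s4) with h | h <;> rw [hG, h]
    · rcases max_choice s1 s2 with h' | h' <;> rw [h'] <;> tauto
    · rcases max_choice s3 s4 with h' | h' <;> rw [h'] <;> tauto
  rcases hcase with hgc | hgc | hgc | hgc
  · -- row 0 is max: project row 1
    have hne : a ^ 2 + b ^ 2 ≠ 0 := by
      intro h0
      rw [hs1, h0, Real.sqrt_zero] at hgc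
      exact hGpos.ne' hgc
    set t := (a * c + b * d) / (a ^ 2 + b ^ 2) with ht
    refine ⟨Matrix.vecMulVec ![1, t] ![a, b], rank_vmv _ _, ?_⟩
    have hsum : (∑ i, ∑ j, (P i j - Matrix.vecMulVec ![1, t] ![a, b] i j) ^ 2)
        = (c - t * a) ^ 2 + (d - t * b) ^ 2 := by
      simp [Fin.sum_univ_two, Matrix.vecMulVec_apply, ← ha, ← hb, ← hc, ← hd]
    rw [hsum, ht, key_dist a b c d hne, ← hs1, ← hgc]
    exact hdiv
  · -- row 1 is max: project row 0
    have hne : c ^ 2 + d ^ 2 ≠ 0 := by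
      intro h0
      rw [hs2, h0, Real.sqrt_zero] at hgc
      exact hGpos.ne' hgc
    set t := (c * a + d * b) / (c ^ 2 + d ^ 2) with ht
    refine ⟨Matrix.vecMulVec ![t, 1] ![c, d], rank_vmv _ _, ?_⟩
    have hsum : (∑ i, ∑ j, (P i j - Matrix.vecMulVec ![t, 1] ![c, d] i j) ^ 2)
        = (a - t * c) ^ 2 + (b - t * d) ^ 2 := by
      simp [Fin.sum_univ_two, Matrix.vecMulVec_apply, ← ha, ← hb, ← hc, ← hd]
    rw [hsum, ht, key_dist c d a b hne, ← hs2, ← hgc]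
    have : |c * b - d * a| = |a * d - b * c| := by rw [abs_sub_comm]; ring_nf
    rw [this]; exact hdiv
  · -- col 0 is max: project col 1
    have hne : a ^ 2 + c ^ 2 ≠ 0 := by
      intro h0
      rw [hs3, h0, Real.sqrt_zero] at hgc
      exact hGpos.ne' hgc
    set t := (a * b + c * d) / (a ^ 2 + c ^ 2) with ht
    refine ⟨Matrix.vecMulVec ![a, c] ![1, t], rank_vmv _ _, ?_⟩
    have hsum : (∑ i, ∑ j, (P i j - Matrix.vecMulVec ![a, c] ![1, t] i j) ^ 2)
        = (b - t * a) ^ 2 + (d - t * c) ^ 2 := by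
      simp [Fin.sum_univ_two, Matrix.vecMulVec_apply, ← ha, ← hb, ← hc, ← hd]
      ring_nf
    rw [hsum, ht, key_dist a c b d hne, ← hs3, ← hgc]
    have : |a * d - c * b| = |a * d - b * c| := by ring_nf
    rw [this]; exact hdiv
  · -- col 1 is max: project col 0
    have hne : b ^ 2 + d ^ 2 ≠ 0 := by
      intro h0
      rw [hs4, h0, Real.sqrt_zero] at hgc
      exact hGpos.ne' hgc
    set t := (b * a + d * c) / (b ^ 2 + d ^ 2) with ht
    refine ⟨Matrix.vecMulVec ![b, d] ![t, 1], rank_vmv _ _, ?_⟩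
    have hsum : (∑ i, ∑ j, (P i j - Matrix.vecMulVec ![b, d] ![t, 1] i j) ^ 2)
        = (a - t * b) ^ 2 + (c - t * d) ^ 2 := by
      simp [Fin.sum_univ_two, Matrix.vecMulVec_apply, ← ha, ← hb, ← hc, ← hd]
      ring_nf
    rw [hsum, ht, key_dist b d a c hne, ← hs4, ← hgc]
    have : |b * c - d * a| = |a * d - b * c| := by rw [abs_sub_comm]; ring_nf
    rw [this]; exact hdiv
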